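/- Let R be a Noetherian ring and f: N → N' a morphism of flatly filtered bundles over R (an R-linear map with f(Fil^i N) ⊆ Fil^i N' for all i). Then the map f ↦ Rees(f), restricting f ⊗ id on N ⊗_R R[t,t^{-1}], gives a bijection Hom_{filt}(N, N') ≅ Hom_{G_m-equiv, R[t]}(Rees(N), Rees(N')), with inverse g ↦ g mod (t-1). -/

import Mathlib

/-!
STATEMENT 5: For `R` Noetherian and flatly filtered bundles `(N, Fil)`, `(N', Fil')` over
`R`, the assignment `f ↦ Rees(f)` (the restriction of `f ⊗ id` on `N ⊗_R R[t,t⁻¹]`) gives a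
bijection between filtered `R`-linear maps `N → N'` and `G_m`-equivariant (i.e. graded)
`R[t]`-linear maps `Rees(N) → Rees(N')`, with inverse `g ↦ g mod (t-1)` (realized below by
the evaluation-at-`t = 1` map `ev1`).
-/

open Polynomial LaurentPolynomial TensorProduct

instance lpSMulComm (R : Type*) [CommRing R] : SMulCommClass R R[X] R[T;T⁻¹] :=
  ⟨fun r p x => by simp [Algebra.smul_def, mul_left_comm]⟩

instance lpTower (R : Type*) [CommRing R] : IsScalarTower R R[X] R[T;T⁻¹] :=
  IsScalarTower.of_algebraMap_eq fun r => by
    rw [← LaurentPolynomial.C_eq_algebraMap, algebraMap_eq_toLaurent,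
      Polynomial.algebraMap_eq, Polynomial.toLaurent_C]

noncomputable instance reesAmbientModule (R : Type*) [CommRing R] (N : Type*)
    [AddCommGroup N] [Module R N] : Module R[X] (R[T;T⁻¹] ⊗[R] N) :=
  TensorProduct.leftModule

/-- The Rees module of a filtered module, as an `R[X]`-submodule of `R[T;T⁻¹] ⊗[R] N`. -/
noncomputable def ReesModule (R : Type*) [CommRing R] (N : Type*) [AddCommGroup N] [Module R N]
    (Fil : ℤ → Submodule R N) : Submodule R[X] (R[T;T⁻¹] ⊗[R] N) :=
  Submodule.span R[X]
    {z : R[T;T⁻¹] ⊗[R] N | ∃ (i : ℤ) (x : N), x ∈ Fil i ∧ z = (T (-i)) ⊗ₜ[R] x}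

variable (R : Type*) [CommRing R]

/-- The degree-`d` homogeneous part of `R[T;T⁻¹] ⊗[R] N`: elements of the form `T^d ⊗ x`. -/
noncomputable def ambientDeg (N : Type*) [AddCommGroup N] [Module R N] (d : ℤ) :
    Submodule R (R[T;T⁻¹] ⊗[R] N) :=
  LinearMap.range ((TensorProduct.mk R R[T;T⁻¹] N) (T d))

/-- A map of Rees modules is `G_m`-equivariant iff it preserves homogeneous parts. -/
def IsGraded {N N' : Type*} [AddCommGroup N] [Module R N] [AddCommGroup N'] [Module R N']
    {Fil : ℤ → Submodule R N} {Fil' : ℤ → Submodule R N'}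
    (g : ReesModule R N Fil →ₗ[R[X]] ReesModule R N' Fil') : Prop :=
  ∀ (d : ℤ) (z : ReesModule R N Fil),
    (z : R[T;T⁻¹] ⊗[R] N) ∈ ambientDeg R N d →
      ((g z : R[T;T⁻¹] ⊗[R] N') ∈ ambientDeg R N' d)

/-- Evaluation at `t = 1`, `N ⊗ R[t,t⁻¹] → N`, i.e. reduction modulo `(t-1)`. -/
noncomputable def ev1 (N : Type*) [AddCommGroup N] [Module R N] :
    (R[T;T⁻¹] ⊗[R] N) →ₗ[R] N :=
  TensorProduct.lift ((LinearMap.lsmul R N).comp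
    ((Finsupp.linearCombination R (fun _ : ℤ => (1 : R)) :
      (ℤ →₀ R) →ₗ[R] R).comp
      (AddMonoidAlgebra.coeffLinearEquiv R : R[T;T⁻¹] ≃ₗ[R] (ℤ →₀ R)).toLinearMap))

/-! ### Auxiliary lemmas -/

section Aux

variable {R : Type*} [CommRing R] {N : Type*} [AddCommGroup N] [Module R N]

theorem ev1_T_tmul (e : ℤ) (y : N) : ev1 R N ((T e : R[T;T⁻¹]) ⊗ₜ[R] y) = y := by
  rw [ev1, TensorProduct.lift.tmul]
  show ((Finsupp.linearCombination R (fun _ : ℤ => (1 : R))) (Finsupp.single e 1)) • y = y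
  rw [Finsupp.linearCombination_single]; simp

/-- The degree-`d` coefficient projection `R[T;T⁻¹] ⊗[R] N → N`. -/
noncomputable def projT (R : Type*) [CommRing R] (N : Type*) [AddCommGroup N] [Module R N]
    (d : ℤ) : (R[T;T⁻¹] ⊗[R] N) →ₗ[R] N :=
  TensorProduct.lift ((LinearMap.lsmul R N).comp
    ((Finsupp.linearCombination R (fun n : ℤ => if n = d then (1 : R) else 0) :
      (ℤ →₀ R) →ₗ[R] R).comp
      (AddMonoidAlgebra.coeffLinearEquiv R : R[T;T⁻¹] ≃ₗ[R] (ℤ →₀ R)).toLinearMap))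

theorem projT_T_tmul (d e : ℤ) (y : N) :
    projT R N d ((T e : R[T;T⁻¹]) ⊗ₜ[R] y) = if e = d then y else 0 := by
  rw [projT, TensorProduct.lift.tmul]
  show ((Finsupp.linearCombination R (fun n : ℤ => if n = d then (1 : R) else 0))
    (Finsupp.single e 1)) • y = _
  rw [Finsupp.linearCombination_single]
  by_cases h : e = d <;> simp [h]

theorem poly_smul_tmul (p : R[X]) (a : R[T;T⁻¹]) (x : N) :
    p • (a ⊗ₜ[R] x) = (Polynomial.toLaurent p * a) ⊗ₜ[R] x := by
  rw [TensorProduct.smul_tmul', Algebra.smul_def, LaurentPolynomial.algebraMap_eq_toLaurent]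

theorem Xpow_smul_T_tmul (k : ℕ) (e : ℤ) (x : N) :
    (X ^ k : R[X]) • ((T e : R[T;T⁻¹]) ⊗ₜ[R] x) = (T (k + e) : R[T;T⁻¹]) ⊗ₜ[R] x := by
  rw [poly_smul_tmul, Polynomial.toLaurent_X_pow, ← T_add]

/-- The Rees module is contained in the `R`-span of its standard generators. -/
theorem rees_le_spanR {Fil : ℤ → Submodule R N} (hdec : Antitone Fil) {z : R[T;T⁻¹] ⊗[R] N}
    (hz : z ∈ ReesModule R N Fil) :
    z ∈ Submodule.span R
      {z : R[T;T⁻¹] ⊗[R] N | ∃ (i : ℤ) (x : N), x ∈ Fil i ∧ z = (T (-i)) ⊗ₜ[R] x} := by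
  set S := Submodule.span R
      {z : R[T;T⁻¹] ⊗[R] N | ∃ (i : ℤ) (x : N), x ∈ Fil i ∧ z = (T (-i)) ⊗ₜ[R] x} with hS
  have hX : ∀ z ∈ S, (X : R[X]) • z ∈ S := by
    intro z hz
    induction hz using Submodule.span_induction with
    | mem w hw =>
      obtain ⟨i, x, hx, rfl⟩ := hw
      have : (X : R[X]) • ((T (-i) : R[T;T⁻¹]) ⊗ₜ[R] x) = (T (-(i - 1)) : R[T;T⁻¹]) ⊗ₜ[R] x := by
        have := Xpow_smul_T_tmul (R := R) 1 (-i) x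
        rw [pow_one] at this
        rw [this]; norm_num; ring_nf
      rw [this]
      exact Submodule.subset_span ⟨i - 1, x, hdec (by omega) hx, rfl⟩
    | zero => simp
    | add x y _ _ ihx ihy => rw [smul_add]; exact add_mem ihx ihy
    | smul a x _ ihx =>
      rw [← IsScalarTower.algebraMap_smul R[X] a x, ← mul_smul, mul_comm, mul_smul,
        IsScalarTower.algebraMap_smul]
      exact Submodule.smul_mem _ a ihx
  have hXpow : ∀ (k : ℕ), ∀ z ∈ S, (X ^ k : R[X]) • z ∈ S := by
    intro k
    induction k with
    | zero => intro z hz; simpa using hz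
    | succ n ih =>
      intro z hz
      rw [pow_succ', mul_smul]
      exact hX _ (ih z hz)
  have hC : ∀ (a : R), ∀ z ∈ S, (Polynomial.C a : R[X]) • z ∈ S := by
    intro a z hz
    rw [← Polynomial.algebraMap_eq, IsScalarTower.algebraMap_smul]
    exact Submodule.smul_mem _ a hz
  have hP : ∀ (p : R[X]), ∀ z ∈ S, p • z ∈ S := by
    intro p
    induction p using Polynomial.induction_on with
    | C a => exact hC a
    | add p q ihp ihq => intro z hz; rw [add_smul]; exact add_mem (ihp z hz) (ihq z hz)
    | monomial n a _ =>
      intro z hz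
      rw [mul_smul]
      exact hC a _ (hXpow (n + 1) z hz)
  induction hz using Submodule.span_induction with
  | mem w hw => exact Submodule.subset_span hw
  | zero => simp
  | add x y _ _ ihx ihy => exact add_mem ihx ihy
  | smul p x _ ihx => exact hP p x ihx

/-- Homogeneous components of Rees module elements lie in the filtration. -/
theorem projT_mem_rees {Fil : ℤ → Submodule R N} (hdec : Antitone Fil) (d : ℤ)
    {z : R[T;T⁻¹] ⊗[R] N} (hz : z ∈ ReesModule R N Fil) : projT R N d z ∈ Fil (-d) := by
  have hz' := rees_le_spanR hdec hz
  clear hz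
  induction hz' using Submodule.span_induction with
  | mem w hw =>
    obtain ⟨i, x, hx, rfl⟩ := hw
    rw [projT_T_tmul]
    by_cases h : -i = d
    · have : i = -d := by omega
      subst this
      simpa [h] using hx
    · simp [h]
  | zero => simp
  | add x y _ _ ihx ihy => rw [map_add]; exact add_mem ihx ihy
  | smul a x _ ihx => rw [map_smul]; exact Submodule.smul_mem _ a ihx

end Aux

theorem rees_hom_bijection
    [IsNoetherianRing R]
    (N : Type*) [AddCommGroup N] [Module R N] [Module.Finite R N] [Module.Flat R N]
    (N' : Type*) [AddCommGroup N'] [Module R N'] [Module.Finite R N'] [Module.Flat R N']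
    (Fil : ℤ → Submodule R N) (Fil' : ℤ → Submodule R N')
    (hdec : Antitone Fil) (hdec' : Antitone Fil')
    (hexh : ∀ x : N, ∃ i : ℤ, x ∈ Fil i) (hexh' : ∀ x : N', ∃ i : ℤ, x ∈ Fil' i)
    (hgr : ∀ i : ℤ, Module.Flat R ((Fil i) ⧸ ((Fil (i + 1)).comap (Fil i).subtype)))
    (hgr' : ∀ i : ℤ, Module.Flat R ((Fil' i) ⧸ ((Fil' (i + 1)).comap (Fil' i).subtype))) :
    -- `f ↦ Rees(f)`: every filtered map extends uniquely to a graded map of Rees modules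
    (∀ f : N →ₗ[R] N', (∀ i : ℤ, (Fil i).map f ≤ Fil' i) →
      ∃! g : ReesModule R N Fil →ₗ[R[X]] ReesModule R N' Fil',
        IsGraded R g ∧
        ∀ z : ReesModule R N Fil,
          (g z : R[T;T⁻¹] ⊗[R] N') = f.baseChange R[T;T⁻¹] (z : R[T;T⁻¹] ⊗[R] N))
    ∧
    -- `g ↦ g mod (t-1)`: every graded map of Rees modules arises from a unique filtered
    -- map, namely its reduction modulo `(t-1)` computed by `ev1`
    (∀ g : ReesModule R N Fil →ₗ[R[X]] ReesModule R N' Fil', IsGraded R g →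
      ∃! f : N →ₗ[R] N',
        (∀ i : ℤ, (Fil i).map f ≤ Fil' i) ∧
        (∀ z : ReesModule R N Fil,
          (g z : R[T;T⁻¹] ⊗[R] N') = f.baseChange R[T;T⁻¹] (z : R[T;T⁻¹] ⊗[R] N)) ∧
        (∀ z : ReesModule R N Fil,
          f (ev1 R N (z : R[T;T⁻¹] ⊗[R] N)) = ev1 R N' (g z : R[T;T⁻¹] ⊗[R] N'))) := by
  constructor
  · -- Part 1
    intro f hf
    set F : (R[T;T⁻¹] ⊗[R] N) →ₗ[R[X]] (R[T;T⁻¹] ⊗[R] N') :=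
      (f.baseChange R[T;T⁻¹]).restrictScalars R[X] with hF
    have hFt : ∀ (a : R[T;T⁻¹]) (x : N), F (a ⊗ₜ[R] x) = a ⊗ₜ[R] f x := fun a x =>
      LinearMap.baseChange_tmul _ _ _
    have hmapsto : ∀ z ∈ ReesModule R N Fil, F z ∈ ReesModule R N' Fil' := by
      intro z hz
      induction hz using Submodule.span_induction with
      | mem w hw =>
        obtain ⟨i, x, hx, rfl⟩ := hw
        rw [hFt]
        exact Submodule.subset_span ⟨i, f x, hf i ⟨x, hx, rfl⟩, rfl⟩
      | zero => rw [map_zero]; exact Submodule.zero_mem _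
      | add x y _ _ ihx ihy => rw [map_add]; exact add_mem ihx ihy
      | smul p x _ ihx => rw [map_smul]; exact Submodule.smul_mem _ p ihx
    refine ⟨F.restrict hmapsto, ⟨?_, ?_⟩, ?_⟩
    · intro d z hz
      obtain ⟨x, hx⟩ := hz
      refine ⟨f x, ?_⟩
      show (T d : R[T;T⁻¹]) ⊗ₜ[R] f x = _
      have : (F.restrict hmapsto z : R[T;T⁻¹] ⊗[R] N') = F (z : R[T;T⁻¹] ⊗[R] N) := rfl
      rw [this, ← hx]
      exact (hFt _ _).symm
    · intro z; rfl
    · rintro g' ⟨_, hg'⟩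
      refine LinearMap.ext fun z => Subtype.ext ?_
      rw [hg' z]; rfl
  · -- Part 2
    intro g hg
    classical
    choose idx hidx using hexh
    obtain ⟨s, hs⟩ := Module.Finite.fg_top (R := R) (M := N)
    obtain ⟨i₀, hi₀⟩ : ∃ i₀ : ℤ, ∀ x ∈ s, i₀ ≤ idx x := by
      rcases s.eq_empty_or_nonempty with h | h
      · exact ⟨0, by simp [h]⟩
      · obtain ⟨b, _, hb⟩ := s.exists_min_image idx h
        exact ⟨idx b, hb⟩
    have hFtop : Fil i₀ = ⊤ := by
      rw [eq_top_iff, ← hs, Submodule.span_le]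
      intro x hx
      exact hdec (hi₀ x hx) (hidx x)
    have hmem : ∀ x : N, (T (-i₀) : R[T;T⁻¹]) ⊗ₜ[R] x ∈ ReesModule R N Fil := fun x =>
      Submodule.subset_span ⟨i₀, x, by rw [hFtop]; trivial, rfl⟩
    let f : N →ₗ[R] N' :=
      { toFun := fun x => ev1 R N' ((g ⟨_, hmem x⟩ : R[T;T⁻¹] ⊗[R] N'))
        map_add' := by
          intro x y
          have h1 : (⟨(T (-i₀) : R[T;T⁻¹]) ⊗ₜ[R] (x + y), hmem (x + y)⟩ : ReesModule R N Fil)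
              = ⟨_, hmem x⟩ + ⟨_, hmem y⟩ := Subtype.ext (TensorProduct.tmul_add _ _ _)
          rw [h1, map_add, Submodule.coe_add, map_add]
        map_smul' := by
          intro r x
          have h1 : (⟨(T (-i₀) : R[T;T⁻¹]) ⊗ₜ[R] (r • x), hmem (r • x)⟩ : ReesModule R N Fil)
              = r • ⟨_, hmem x⟩ := by
            refine Subtype.ext (?_ : (T (-i₀) : R[T;T⁻¹]) ⊗ₜ[R] (r • x)
              = r • ((T (-i₀) : R[T;T⁻¹]) ⊗ₜ[R] x))
            exact TensorProduct.tmul_smul _ _ _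
          rw [h1, LinearMap.map_smul_of_tower]
          show ev1 R N' (r • ((g ⟨_, hmem x⟩ : ReesModule R N' Fil') : R[T;T⁻¹] ⊗[R] N'))
              = r • ev1 R N' _
          rw [map_smul] }
    have hfx : ∀ x : N,
        f x = ev1 R N' ((g ⟨_, hmem x⟩ : R[T;T⁻¹] ⊗[R] N')) := fun _ => rfl
    have hA : ∀ x : N,
        ((g ⟨_, hmem x⟩ : ReesModule R N' Fil') : R[T;T⁻¹] ⊗[R] N')
          = (T (-i₀) : R[T;T⁻¹]) ⊗ₜ[R] f x := by
      intro x
      obtain ⟨y, hy⟩ := hg (-i₀) ⟨_, hmem x⟩ ⟨x, rfl⟩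
      rw [TensorProduct.mk_apply] at hy
      have hfy : f x = y := by rw [hfx, ← hy, ev1_T_tmul]
      rw [← hy, hfy]
    have hclaim : ∀ z : ReesModule R N Fil,
        (g z : R[T;T⁻¹] ⊗[R] N') = f.baseChange R[T;T⁻¹] (z : R[T;T⁻¹] ⊗[R] N) := by
      rintro ⟨w, hw⟩
      induction hw using Submodule.span_induction with
      | mem w hw' =>
        obtain ⟨i, x, hx, rfl⟩ := hw'
        set z : ReesModule R N Fil :=
          ⟨(T (-i) : R[T;T⁻¹]) ⊗ₜ[R] x, Submodule.subset_span ⟨i, x, hx, rfl⟩⟩ with hz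
        show (g z : R[T;T⁻¹] ⊗[R] N') = _
        rw [LinearMap.baseChange_tmul]
        rcases le_or_gt i i₀ with hle | hlt
        · -- X ^ (i₀ - i) • (T (-i₀) ⊗ x) = T (-i) ⊗ x
          set k := (i₀ - i).toNat with hk
          have hk' : (k : ℤ) = i₀ - i := Int.toNat_of_nonneg (by omega)
          have e1 : (X ^ k : R[X]) • (⟨_, hmem x⟩ : ReesModule R N Fil) = z := by
            refine Subtype.ext ?_
            show (X ^ k : R[X]) • ((T (-i₀) : R[T;T⁻¹]) ⊗ₜ[R] x) = (T (-i) : R[T;T⁻¹]) ⊗ₜ[R] x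
            rw [Xpow_smul_T_tmul]
            have hki : (k : ℤ) + -i₀ = -i := by omega
            rw [hki]
          have e2 : (X ^ k : R[X]) • ((T (-i₀) : R[T;T⁻¹]) ⊗ₜ[R] f x)
              = (T (-i) : R[T;T⁻¹]) ⊗ₜ[R] f x := by
            rw [Xpow_smul_T_tmul]
            have hki : (k : ℤ) + -i₀ = -i := by omega
            rw [hki]
          rw [← e1, map_smul]
          show (X ^ k : R[X]) • ((g ⟨_, hmem x⟩ : ReesModule R N' Fil') : R[T;T⁻¹] ⊗[R] N') = _
          rw [hA, e2]
        · -- X ^ (i - i₀) • (T (-i) ⊗ x) = T (-i₀) ⊗ x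
          set k := (i - i₀).toNat with hk
          have hk' : (k : ℤ) = i - i₀ := Int.toNat_of_nonneg (by omega)
          obtain ⟨y, hy⟩ := hg (-i) z ⟨x, rfl⟩
          rw [TensorProduct.mk_apply] at hy
          have e2 : (X ^ k : R[X]) • z = ⟨_, hmem x⟩ := by
            refine Subtype.ext ?_
            show (X ^ k : R[X]) • ((T (-i) : R[T;T⁻¹]) ⊗ₜ[R] x)
                = (T (-i₀) : R[T;T⁻¹]) ⊗ₜ[R] x
            rw [Xpow_smul_T_tmul]
            have hki : (k : ℤ) + -i = -i₀ := by omega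
            rw [hki]
          have e3 : (T (-i₀) : R[T;T⁻¹]) ⊗ₜ[R] f x = (T (-i₀) : R[T;T⁻¹]) ⊗ₜ[R] y := by
            rw [← hA x, ← e2, map_smul]
            show (X ^ k : R[X]) • ((g z : ReesModule R N' Fil') : R[T;T⁻¹] ⊗[R] N') = _
            rw [← hy, Xpow_smul_T_tmul]
            have hki : (k : ℤ) + -i = -i₀ := by omega
            rw [hki]
          have hfy : f x = y := by
            have h4 := congrArg (ev1 R N') e3
            rwa [ev1_T_tmul, ev1_T_tmul] at h4
          rw [← hy, hfy]
      | zero =>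
        have h0 : (⟨0, Submodule.zero_mem _⟩ : ReesModule R N Fil) = 0 := rfl
        rw [h0, map_zero]
        simp
      | add u v hu hv ihu ihv =>
        have h1 : (⟨u + v, Submodule.add_mem _ hu hv⟩ : ReesModule R N Fil)
            = ⟨u, hu⟩ + ⟨v, hv⟩ := rfl
        rw [h1, map_add, Submodule.coe_add, ihu, ihv, ← map_add, Submodule.coe_add]
      | smul p w hw ih =>
        have h1 : (⟨p • w, Submodule.smul_mem _ p hw⟩ : ReesModule R N Fil)
            = p • ⟨w, hw⟩ := rfl
        rw [h1, map_smul]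
        show p • ((g ⟨w, hw⟩ : ReesModule R N' Fil') : R[T;T⁻¹] ⊗[R] N') = _
        rw [ih, ← LinearMap.map_smul_of_tower]
        rfl
    have hfil : ∀ i : ℤ, (Fil i).map f ≤ Fil' i := by
      rintro i _ ⟨x, hx, rfl⟩
      have h1 := (g ⟨_, Submodule.subset_span ⟨i, x, hx, rfl⟩⟩).2
      rw [hclaim, LinearMap.baseChange_tmul] at h1
      have h2 := projT_mem_rees hdec' (-i) h1
      rw [projT_T_tmul] at h2
      simpa using h2
    have hcomm : ∀ w : R[T;T⁻¹] ⊗[R] N,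
        f (ev1 R N w) = ev1 R N' (f.baseChange R[T;T⁻¹] w) := by
      intro w
      induction w using TensorProduct.induction_on with
      | zero => simp
      | tmul a x =>
        rw [LinearMap.baseChange_tmul]
        have e1 : ev1 R N (a ⊗ₜ[R] x)
            = (Finsupp.linearCombination R (fun _ : ℤ => (1 : R)) (AddMonoidAlgebra.coeffLinearEquiv R a)) • x :=
          TensorProduct.lift.tmul _ _
        have e2 : ev1 R N' (a ⊗ₜ[R] f x)
            = (Finsupp.linearCombination R (fun _ : ℤ => (1 : R)) (AddMonoidAlgebra.coeffLinearEquiv R a)) • f x :=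
          TensorProduct.lift.tmul _ _
        rw [e1, e2, map_smul]
      | add u v ihu ihv => rw [map_add, map_add, ihu, ihv, map_add, map_add]
    refine ⟨f, ⟨hfil, hclaim, fun z => by rw [hclaim z]; exact hcomm _⟩, ?_⟩
    rintro f' ⟨hf'1, hf'2, hf'3⟩
    refine LinearMap.ext fun x => ?_
    have h1 := hf'2 ⟨_, hmem x⟩
    rw [hclaim, LinearMap.baseChange_tmul, LinearMap.baseChange_tmul] at h1
    have h2 := congrArg (ev1 R N') h1
    rw [ev1_T_tmul, ev1_T_tmul] at h2
    exact h2.symm
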